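/- For every 1 ≤ j ≤ q, the N-orbit of w_j is N(w_j) = { s_1 w_1 + ⋯ + s_{j−1} w_{j−1} + w_j : s_1, …, s_{j−1} ∈ ℝ }; in particular N(w_1) = {w_1}. -/

import Mathlib

open Matrix

noncomputable section

/-- 1-based standard basis vector `e i` of `ℝ^n` (zero if `i` is out of range). -/
def stdE (n i : ℕ) : Fin n → ℝ := fun j => if (j : ℕ) + 1 = i then 1 else 0

/-- `w i := e_{p-i+1} - e_{p+i}`. -/
def wVec (p q i : ℕ) : Fin (p + q) → ℝ := stdE (p + q) (p - i + 1) - stdE (p + q) (p + i)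

/-- `v i := e_{p-i+1} + e_{p+i}`. -/
def vVec (p q i : ℕ) : Fin (p + q) → ℝ := stdE (p + q) (p - i + 1) + stdE (p + q) (p + i)

/-- The scalar product of signature `(p,q)` on `ℝ^{p+q}`. -/
def ip (p q : ℕ) (x y : Fin (p + q) → ℝ) : ℝ :=
  ∑ i : Fin (p + q), (if (i : ℕ) < p then (1 : ℝ) else -1) * x i * y i

/-- The matrix `J = diag(I_p, -I_q)`. -/
def Jmat (p q : ℕ) : Matrix (Fin (p + q)) (Fin (p + q)) ℝ :=
  Matrix.diagonal (fun i => if (i : ℕ) < p then (1 : ℝ) else -1)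

/-- Entry of a square matrix, with 1-based indices (0 outside the range). -/
def ent {n : ℕ} (X : Matrix (Fin n) (Fin n) ℝ) (i j : ℕ) : ℝ :=
  if h : i - 1 < n ∧ j - 1 < n then X ⟨i - 1, h.1⟩ ⟨j - 1, h.2⟩ else 0

/-- Coordinate of a vector, with 1-based index (0 outside the range). -/
def vent {n : ℕ} (x : Fin n → ℝ) (i : ℕ) : ℝ :=
  if h : i - 1 < n then x ⟨i - 1, h⟩ else 0

lemma ent_zero {n : ℕ} (i j : ℕ) : ent (0 : Matrix (Fin n) (Fin n) ℝ) i j = 0 := by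
  unfold ent; split <;> simp

lemma ent_add {n : ℕ} (X Y : Matrix (Fin n) (Fin n) ℝ) (i j : ℕ) :
    ent (X + Y) i j = ent X i j + ent Y i j := by
  unfold ent; split <;> simp [Matrix.add_apply]

lemma ent_smul {n : ℕ} (c : ℝ) (X : Matrix (Fin n) (Fin n) ℝ) (i j : ℕ) :
    ent (c • X) i j = c * ent X i j := by
  unfold ent; split <;> simp [Matrix.smul_apply]

/-- The Lie algebra `𝔰𝔬(p,q)`, as a set of matrices. -/
def soSet (p q : ℕ) : Set (Matrix (Fin (p + q)) (Fin (p + q)) ℝ) :=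
  {X | Xᵀ * Jmat p q + Jmat p q * X = 0}

lemma soSet_zero (p q : ℕ) : (0 : Matrix (Fin (p + q)) (Fin (p + q)) ℝ) ∈ soSet p q := by
  simp [soSet]

lemma soSet_add (p q : ℕ) {X Y : Matrix (Fin (p + q)) (Fin (p + q)) ℝ}
    (hX : X ∈ soSet p q) (hY : Y ∈ soSet p q) : X + Y ∈ soSet p q := by
  simp only [soSet, Set.mem_setOf_eq] at *
  rw [Matrix.transpose_add, Matrix.add_mul, Matrix.mul_add,
    show Xᵀ * Jmat p q + Yᵀ * Jmat p q + (Jmat p q * X + Jmat p q * Y)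
      = (Xᵀ * Jmat p q + Jmat p q * X) + (Yᵀ * Jmat p q + Jmat p q * Y) by abel,
    hX, hY, add_zero]

lemma soSet_smul (p q : ℕ) (c : ℝ) {X : Matrix (Fin (p + q)) (Fin (p + q)) ℝ}
    (hX : X ∈ soSet p q) : c • X ∈ soSet p q := by
  simp only [soSet, Set.mem_setOf_eq] at *
  rw [Matrix.transpose_smul, Matrix.smul_mul, Matrix.mul_smul, ← smul_add, hX, smul_zero]

/-- The set `𝔭` of symmetric elements of `𝔰𝔬(p,q)` (Cartan decomposition). -/
def pSet (p q : ℕ) : Set (Matrix (Fin (p + q)) (Fin (p + q)) ℝ) :=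
  {X | X ∈ soSet p q ∧ Xᵀ = X}

/-- The nilpotent Iwasawa factor `𝔫`, as a set of matrices; the conditions are the
entry conditions on the blocks `A`, `B`, `D` (1-based indices; `A i j = ent X i j`,
`B i l = ent X i (p + l)`, `D i j = ent X (p + i) (p + j)`). -/
def nSet (p q : ℕ) : Set (Matrix (Fin (p + q)) (Fin (p + q)) ℝ) :=
  {X | X ∈ soSet p q ∧
    (∀ i j, 1 ≤ i → i ≤ p - q → 1 ≤ j → j ≤ p - q → ent X i j = 0) ∧
    (∀ l, 1 ≤ l → l ≤ q → ent X (p - l + 1) (p + l) = 0) ∧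
    (∀ k l, 1 ≤ k → k ≤ p - q → 1 ≤ l → l ≤ q →
      ent X k (p - l + 1) = ent X k (p + l)) ∧
    (∀ i j, 1 ≤ i → i < j → j ≤ q →
      ent X (p + 1 - j) (p + 1 - i) = ent X (p + 1 - j) (p + i)) ∧
    (∀ i j, 1 ≤ i → i < j → j ≤ q →
      ent X (p + i) (p + j) = - ent X (p + 1 - i) (p + j))}

/-- The abelian factor `𝔞`, as a set of matrices: all entries vanish except the
pairs in positions `(p-l+1, p+l)` and `(p+l, p-l+1)`, `1 ≤ l ≤ q`, which are equal. -/
def aSet (p q : ℕ) : Set (Matrix (Fin (p + q)) (Fin (p + q)) ℝ) :=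
  {X | (∀ l, 1 ≤ l → l ≤ q → ent X (p - l + 1) (p + l) = ent X (p + l) (p - l + 1)) ∧
    (∀ i j, 1 ≤ i → i ≤ p + q → 1 ≤ j → j ≤ p + q →
      (¬ ∃ l, 1 ≤ l ∧ l ≤ q ∧ ((i = p - l + 1 ∧ j = p + l) ∨ (i = p + l ∧ j = p - l + 1))) →
      ent X i j = 0)}

/-- `𝔨₀`: skew-symmetric upper-left `(p-q)×(p-q)` block, all other entries zero. -/
def kSet (p q : ℕ) : Set (Matrix (Fin (p + q)) (Fin (p + q)) ℝ) :=
  {X | (∀ i j, 1 ≤ i → i ≤ p - q → 1 ≤ j → j ≤ p - q → ent X i j = - ent X j i) ∧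
    (∀ i j, 1 ≤ i → i ≤ p + q → 1 ≤ j → j ≤ p + q →
      ¬(i ≤ p - q ∧ j ≤ p - q) → ent X i j = 0)}

/-- The nilpotent Iwasawa factor `𝔫` as an `ℝ`-subspace of `M_{p+q}(ℝ)`. -/
def nSub (p q : ℕ) : Submodule ℝ (Matrix (Fin (p + q)) (Fin (p + q)) ℝ) where
  carrier := nSet p q
  zero_mem' := by
    refine ⟨soSet_zero p q, ?_, ?_, ?_, ?_, ?_⟩ <;> intros <;> simp [ent_zero]
  add_mem' := by
    rintro X Y ⟨h0, h1, h2, h3, h4, h5⟩ ⟨g0, g1, g2, g3, g4, g5⟩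
    refine ⟨soSet_add p q h0 g0, ?_, ?_, ?_, ?_, ?_⟩
    · intro i j hi hi' hj hj'
      rw [ent_add, h1 i j hi hi' hj hj', g1 i j hi hi' hj hj', add_zero]
    · intro l hl hl'
      rw [ent_add, h2 l hl hl', g2 l hl hl', add_zero]
    · intro k l hk hk' hl hl'
      rw [ent_add, ent_add, h3 k l hk hk' hl hl', g3 k l hk hk' hl hl']
    · intro i j hi hij hj
      rw [ent_add, ent_add, h4 i j hi hij hj, g4 i j hi hij hj]
    · intro i j hi hij hj
      rw [ent_add, ent_add, h5 i j hi hij hj, g5 i j hi hij hj]; ring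
  smul_mem' := by
    rintro c X ⟨h0, h1, h2, h3, h4, h5⟩
    refine ⟨soSet_smul p q c h0, ?_, ?_, ?_, ?_, ?_⟩
    · intro i j hi hi' hj hj'
      rw [ent_smul, h1 i j hi hi' hj hj', mul_zero]
    · intro l hl hl'
      rw [ent_smul, h2 l hl hl', mul_zero]
    · intro k l hk hk' hl hl'
      rw [ent_smul, ent_smul, h3 k l hk hk' hl hl']
    · intro i j hi hij hj
      rw [ent_smul, ent_smul, h4 i j hi hij hj]
    · intro i j hi hij hj
      rw [ent_smul, ent_smul, h5 i j hi hij hj]; ring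

/-- The abelian factor `𝔞` as an `ℝ`-subspace of `M_{p+q}(ℝ)`. -/
def aSub (p q : ℕ) : Submodule ℝ (Matrix (Fin (p + q)) (Fin (p + q)) ℝ) where
  carrier := aSet p q
  zero_mem' := by
    refine ⟨?_, ?_⟩ <;> intros <;> simp [ent_zero]
  add_mem' := by
    rintro X Y ⟨h1, h2⟩ ⟨g1, g2⟩
    refine ⟨?_, ?_⟩
    · intro l hl hl'
      rw [ent_add, ent_add, h1 l hl hl', g1 l hl hl']
    · intro i j hi hi' hj hj' hne
      rw [ent_add, h2 i j hi hi' hj hj' hne, g2 i j hi hi' hj hj' hne, add_zero]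
  smul_mem' := by
    rintro c X ⟨h1, h2⟩
    refine ⟨?_, ?_⟩
    · intro l hl hl'
      rw [ent_smul, ent_smul, h1 l hl hl']
    · intro i j hi hi' hj hj' hne
      rw [ent_smul, h2 i j hi hi' hj hj' hne, mul_zero]

/-- `𝔨₀` as an `ℝ`-subspace of `M_{p+q}(ℝ)`. -/
def kSub (p q : ℕ) : Submodule ℝ (Matrix (Fin (p + q)) (Fin (p + q)) ℝ) where
  carrier := kSet p q
  zero_mem' := by
    refine ⟨?_, ?_⟩ <;> intros <;> simp [ent_zero]
  add_mem' := by
    rintro X Y ⟨h1, h2⟩ ⟨g1, g2⟩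
    refine ⟨?_, ?_⟩
    · intro i j hi hi' hj hj'
      rw [ent_add, ent_add, h1 i j hi hi' hj hj', g1 i j hi hi' hj hj']; ring
    · intro i j hi hi' hj hj' hne
      rw [ent_add, h2 i j hi hi' hj hj' hne, g2 i j hi hi' hj hj' hne, add_zero]
  smul_mem' := by
    rintro c X ⟨h1, h2⟩
    refine ⟨?_, ?_⟩
    · intro i j hi hi' hj hj'
      rw [ent_smul, ent_smul, h1 i j hi hi' hj hj']; ring
    · intro i j hi hi' hj hj' hne
      rw [ent_smul, h2 i j hi hi' hj hj' hne, mul_zero]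

/-- The subspace `{X ∈ M_n(ℝ) : X x = 0}`. -/
def kerAt {n : ℕ} (x : Fin n → ℝ) : Submodule ℝ (Matrix (Fin n) (Fin n) ℝ) where
  carrier := {X | X *ᵥ x = 0}
  zero_mem' := by simp [Matrix.zero_mulVec]
  add_mem' := by
    intro X Y hX hY
    simp only [Set.mem_setOf_eq] at *
    rw [Matrix.add_mulVec, hX, hY, add_zero]
  smul_mem' := by
    intro c X hX
    simp only [Set.mem_setOf_eq] at *
    rw [Matrix.smul_mulVec, hX, smul_zero]

/-- The exponential of a matrix, as a unit of `M_n(ℝ)`, i.e. an element of `GL(n, ℝ)`. -/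
def expUnit {n : ℕ} (X : Matrix (Fin n) (Fin n) ℝ) : (Matrix (Fin n) (Fin n) ℝ)ˣ where
  val := NormedSpace.exp X
  inv := NormedSpace.exp (-X)
  val_inv := by
    rw [← Matrix.exp_add_of_commute X (-X) (Commute.neg_right (Commute.refl X)),
      add_neg_cancel, NormedSpace.exp_zero]
  inv_val := by
    rw [← Matrix.exp_add_of_commute (-X) X (Commute.neg_left (Commute.refl X)),
      neg_add_cancel, NormedSpace.exp_zero]

/-- The subgroup `N = exp(𝔫)` of `GL(p+q, ℝ)` generated by exponentials of elements of `𝔫`. -/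
def Ngrp (p q : ℕ) : Subgroup (Matrix (Fin (p + q)) (Fin (p + q)) ℝ)ˣ :=
  Subgroup.closure {g | ∃ X ∈ nSet p q, g = expUnit X}

/-- The subgroup `AN` of `GL(p+q, ℝ)` generated by exponentials of elements of `𝔞 ∪ 𝔫`. -/
def ANgrp (p q : ℕ) : Subgroup (Matrix (Fin (p + q)) (Fin (p + q)) ℝ)ˣ :=
  Subgroup.closure {g | ∃ X ∈ aSet p q ∪ nSet p q, g = expUnit X}

/-- The subgroup `Q = K₀AN` of `GL(p+q, ℝ)` generated by exponentials of `𝔨₀ ∪ 𝔞 ∪ 𝔫`. -/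
def Qgrp (p q : ℕ) : Subgroup (Matrix (Fin (p + q)) (Fin (p + q)) ℝ)ˣ :=
  Subgroup.closure {g | ∃ X ∈ kSet p q ∪ aSet p q ∪ nSet p q, g = expUnit X}

/-- The orbit `G(x)` of a point `x ∈ ℝ^n` under a subgroup `G` of `GL(n, ℝ)`. -/
def orb {n : ℕ} (G : Subgroup (Matrix (Fin n) (Fin n) ℝ)ˣ) (x : Fin n → ℝ) :
    Set (Fin n → ℝ) :=
  {v | ∃ g ∈ G, (g : Matrix (Fin n) (Fin n) ℝ) *ᵥ x = v}

end

section Aux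

open Matrix

lemma stdE_apply (n i : ℕ) (r : Fin n) : stdE n i r = if (r : ℕ) + 1 = i then 1 else 0 := rfl

lemma dotProduct_stdE {n : ℕ} (x : Fin n → ℝ) (i : ℕ) (h1 : 1 ≤ i) (h2 : i ≤ n) :
    x ⬝ᵥ stdE n i = x ⟨i - 1, by omega⟩ := by
  unfold dotProduct stdE
  rw [Finset.sum_eq_single (⟨i - 1, by omega⟩ : Fin n)]
  · simp; omega
  · intro b _ hb
    simp only [mul_ite, mul_one, mul_zero, ite_eq_right_iff]
    intro hb'
    exact absurd (Fin.ext (by simp only [Fin.val_mk]; omega)) hb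
  · simp

lemma stdE_dot {n : ℕ} (i j : ℕ) (h1 : 1 ≤ i) (h2 : i ≤ n) :
    stdE n j ⬝ᵥ stdE n i = if i = j then 1 else 0 := by
  rw [dotProduct_stdE _ i h1 h2, stdE_apply]
  simp only [Fin.val_mk]
  congr 1
  simp only [eq_iff_iff]
  omega

lemma mulVec_stdE {n : ℕ} (X : Matrix (Fin n) (Fin n) ℝ) (i : ℕ) (h1 : 1 ≤ i) (h2 : i ≤ n) :
    X *ᵥ stdE n i = fun r => X r ⟨i - 1, by omega⟩ := by
  funext r
  exact dotProduct_stdE (X r) i h1 h2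

lemma mulVec_wVec {p q : ℕ} (X : Matrix (Fin (p + q)) (Fin (p + q)) ℝ) (k : ℕ)
    (hk1 : 1 ≤ k) (hk2 : k ≤ q) (hpq : q ≤ p) :
    X *ᵥ wVec p q k = fun r => X r ⟨p - k, by omega⟩ - X r ⟨p + k - 1, by omega⟩ := by
  funext r
  have h1 : X *ᵥ stdE (p + q) (p - k + 1) = fun r => X r ⟨p - k, by omega⟩ := by
    rw [mulVec_stdE X (p - k + 1) (by omega) (by omega)]
    simp
  have h2 : X *ᵥ stdE (p + q) (p + k) = fun r => X r ⟨p + k - 1, by omega⟩ :=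
    mulVec_stdE X (p + k) (by omega) (by omega)
  rw [wVec, Matrix.mulVec_sub, h1, h2]
  simp

lemma wVec_apply (p q k : ℕ) (r : Fin (p + q)) :
    wVec p q k r = (if (r : ℕ) + 1 = p - k + 1 then (1:ℝ) else 0)
      - (if (r : ℕ) + 1 = p + k then (1:ℝ) else 0) := rfl

lemma vVec_apply (p q k : ℕ) (r : Fin (p + q)) :
    vVec p q k r = (if (r : ℕ) + 1 = p - k + 1 then (1:ℝ) else 0)
      + (if (r : ℕ) + 1 = p + k then (1:ℝ) else 0) := rfl

lemma ent_eq {n : ℕ} (X : Matrix (Fin n) (Fin n) ℝ) {i j : ℕ} (r s : Fin n)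
    (hi : i = (r : ℕ) + 1) (hj : j = (s : ℕ) + 1) : ent X i j = X r s := by
  subst hi hj
  unfold ent
  rw [dif_pos ⟨by omega, by omega⟩]
  congr 1 <;> exact Fin.ext (by omega)

lemma so_apply {p q : ℕ} {X : Matrix (Fin (p + q)) (Fin (p + q)) ℝ} (hX : X ∈ soSet p q)
    (r s : Fin (p + q)) :
    X s r * (if (s : ℕ) < p then (1:ℝ) else -1)
      + (if (r : ℕ) < p then (1:ℝ) else -1) * X r s = 0 := by
  have h0 : Xᵀ * Jmat p q + Jmat p q * X = 0 := hX
  have h := congrFun (congrFun h0 r) s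
  simpa [Jmat, Matrix.mul_diagonal, Matrix.diagonal_mul, Matrix.transpose_apply,
    Matrix.add_apply] using h

end Aux

section Aux2

open Matrix

variable {p q : ℕ}

lemma so_mixed {X : Matrix (Fin (p + q)) (Fin (p + q)) ℝ} (hX : X ∈ soSet p q)
    (r s : Fin (p + q)) (hr : p ≤ (r : ℕ)) (hs : (s : ℕ) < p) : X r s = X s r := by
  have h := so_apply hX r s
  rw [if_pos hs, if_neg (by omega)] at h
  linarith

lemma so_skewL {X : Matrix (Fin (p + q)) (Fin (p + q)) ℝ} (hX : X ∈ soSet p q)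
    (r s : Fin (p + q)) (hr : (r : ℕ) < p) (hs : (s : ℕ) < p) : X r s = - X s r := by
  have h := so_apply hX r s
  rw [if_pos hs, if_pos hr] at h
  linarith

lemma so_skewR {X : Matrix (Fin (p + q)) (Fin (p + q)) ℝ} (hX : X ∈ soSet p q)
    (r s : Fin (p + q)) (hr : p ≤ (r : ℕ)) (hs : p ≤ (s : ℕ)) : X r s = - X s r := by
  have h := so_apply hX r s
  rw [if_neg (by omega), if_neg (by omega)] at h
  linarith

lemma so_diag {X : Matrix (Fin (p + q)) (Fin (p + q)) ℝ} (hX : X ∈ soSet p q)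
    (r : Fin (p + q)) : X r r = 0 := by
  have h := so_apply hX r r
  split_ifs at h <;> linarith

lemma nSet_mulVec_w (hpq : q ≤ p) {X : Matrix (Fin (p + q)) (Fin (p + q)) ℝ}
    (hX : X ∈ nSet p q) (k : ℕ) (hk1 : 1 ≤ k) (hk2 : k ≤ q) :
    X *ᵥ wVec p q k = ∑ m ∈ Finset.Icc 1 (k - 1),
      (X ⟨p - m, by omega⟩ ⟨p - k, by omega⟩
        - X ⟨p - m, by omega⟩ ⟨p + k - 1, by omega⟩) • wVec p q m := by
  obtain ⟨hso, h1, h2, h3, h4, h5⟩ := hX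
  rw [mulVec_wVec X k hk1 hk2 hpq]
  funext r
  rw [Finset.sum_apply]
  simp only [Pi.smul_apply, wVec_apply, smul_eq_mul]
  set cA : Fin (p + q) := ⟨p - k, by omega⟩ with hcA
  set cB : Fin (p + q) := ⟨p + k - 1, by omega⟩ with hcB
  rcases lt_or_ge (r : ℕ) (p - q) with hr | hr
  · -- row in the top block
    rw [Finset.sum_eq_zero (fun m hm => by
      simp only [Finset.mem_Icc] at hm
      rw [if_neg (by omega), if_neg (by omega)]; ring)]
    have E := h3 ((r : ℕ) + 1) k (by omega) (by omega) hk1 hk2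
    rw [ent_eq X r cA rfl (by simp [hcA] <;> omega),
      ent_eq X r cB rfl (by simp [hcB] <;> omega)] at E
    rw [E]; ring
  · rcases lt_or_ge (r : ℕ) p with hrp | hrp
    · -- r = p - m₀  (0-based), m₀ := p - r
      set m₀ := p - (r : ℕ) with hm₀
      have hrm : r = (⟨p - m₀, by omega⟩ : Fin (p + q)) := Fin.ext (by simp; omega)
      have hm₀1 : 1 ≤ m₀ := by omega
      have hm₀q : m₀ ≤ q := by omega
      rcases lt_trichotomy m₀ k with hlt | heq | hgt
      · rw [Finset.sum_eq_single m₀]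
        · rw [if_pos (by omega), if_neg (by omega), hrm]; ring
        · intro m hm hne
          simp only [Finset.mem_Icc] at hm
          rw [if_neg (by omega), if_neg (by omega)]; ring
        · intro h; exact absurd (Finset.mem_Icc.2 ⟨hm₀1, by omega⟩) h
      · rw [Finset.sum_eq_zero (fun m hm => by
          simp only [Finset.mem_Icc] at hm
          rw [if_neg (by omega), if_neg (by omega)]; ring)]
        have E1 : X r cA = 0 := by
          have : r = cA := Fin.ext (by simp [hcA] <;> omega)
          rw [this]; exact so_diag hso cA
        have E2 := h2 k hk1 hk2
        rw [ent_eq X r cB (by simp [hrm] <;> omega) (by simp [hcB] <;> omega)] at E2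
        rw [E1, E2]; ring
      · rw [Finset.sum_eq_zero (fun m hm => by
          simp only [Finset.mem_Icc] at hm
          rw [if_neg (by omega), if_neg (by omega)]; ring)]
        have E := h4 k m₀ hk1 hgt hm₀q
        rw [ent_eq X r cA (by simp [hrm] <;> omega) (by simp [hcA] <;> omega),
          ent_eq X r cB (by simp [hrm] <;> omega) (by simp [hcB] <;> omega)] at E
        rw [E]; ring
    · -- r = p + m₀ - 1 (0-based), m₀ := r - p + 1
      set m₀ := (r : ℕ) - p + 1 with hm₀
      have hm₀1 : 1 ≤ m₀ := by omega
      have hm₀q : m₀ ≤ q := by have := r.isLt; omega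
      set rr : Fin (p + q) := ⟨p - m₀, by omega⟩ with hrr
      rcases lt_trichotomy m₀ k with hlt | heq | hgt
      · rw [Finset.sum_eq_single m₀]
        · rw [if_neg (by omega), if_pos (by omega)]
          -- goal : X r cA - X r cB = (X rr cA - X rr cB) * (0 - 1)
          have Ea : X r cA = X cA r := so_mixed hso r cA (by omega) (by simp [hcA] <;> omega)
          have Eb := h5 m₀ k hm₀1 hlt hk2
          rw [ent_eq X r cB (by omega) (by simp [hcB] <;> omega),
            ent_eq X rr cB (by simp [hrr] <;> omega) (by simp [hcB] <;> omega)] at Eb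
          have Ec := h4 m₀ k hm₀1 hlt hk2
          rw [ent_eq X cA rr (by simp [hcA] <;> omega) (by simp [hrr] <;> omega),
            ent_eq X cA r (by simp [hcA] <;> omega) (by omega)] at Ec
          have Ed : X cA rr = - X rr cA :=
            so_skewL hso cA rr (by simp [hcA] <;> omega) (by simp [hrr] <;> omega)
          rw [Ea, Eb, ← Ec, Ed]; ring
        · intro m hm hne
          simp only [Finset.mem_Icc] at hm
          rw [if_neg (by omega), if_neg (by omega)]; ring
        · intro h; exact absurd (Finset.mem_Icc.2 ⟨hm₀1, by omega⟩) h
      · rw [Finset.sum_eq_zero (fun m hm => by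
          simp only [Finset.mem_Icc] at hm
          rw [if_neg (by omega), if_neg (by omega)]; ring)]
        have Ea : X r cA = X cA r := so_mixed hso r cA (by omega) (by simp [hcA] <;> omega)
        have E2 := h2 k hk1 hk2
        rw [ent_eq X cA r (by simp [hcA] <;> omega) (by omega)] at E2
        have Eb : X r cB = 0 := by
          have : r = cB := Fin.ext (by simp [hcB] <;> omega)
          rw [this]; exact so_diag hso cB
        rw [Ea, E2, Eb]; ring
      · rw [Finset.sum_eq_zero (fun m hm => by
          simp only [Finset.mem_Icc] at hm
          rw [if_neg (by omega), if_neg (by omega)]; ring)]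
        have Ea : X r cA = X cA r := so_mixed hso r cA (by omega) (by simp [hcA] <;> omega)
        have Eb : X r cB = - X cB r := so_skewR hso r cB (by omega) (by simp [hcB] <;> omega)
        have Ec := h5 k m₀ hk1 hgt hm₀q
        rw [ent_eq X cB r (by simp [hcB] <;> omega) (by omega),
          ent_eq X cA r (by simp [hcA] <;> omega) (by omega)] at Ec
        rw [Ea, Eb, Ec]; ring

end Aux2

section Aux3

open Matrix

/-- Span of `w_1, …, w_k`. -/
def Wspan (p q k : ℕ) : Submodule ℝ (Fin (p + q) → ℝ) :=
  Submodule.span ℝ {v | ∃ m, 1 ≤ m ∧ m ≤ k ∧ v = wVec p q m}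

lemma Wspan_mono (p q : ℕ) {k l : ℕ} (h : k ≤ l) : Wspan p q k ≤ Wspan p q l :=
  Submodule.span_mono (fun v ⟨m, h1, h2, h3⟩ => ⟨m, h1, le_trans h2 h, h3⟩)

lemma wVec_mem_Wspan (p q : ℕ) {m k : ℕ} (h1 : 1 ≤ m) (h2 : m ≤ k) :
    wVec p q m ∈ Wspan p q k :=
  Submodule.subset_span ⟨m, h1, h2, rfl⟩

lemma Wspan_zero (p q : ℕ) : Wspan p q 0 = ⊥ := by
  rw [Wspan, show {v | ∃ m, 1 ≤ m ∧ m ≤ 0 ∧ v = wVec p q m} = (∅ : Set (Fin (p+q) → ℝ)) by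
    ext v; simp, Submodule.span_empty]

lemma Wspan_elim (p q : ℕ) {k : ℕ} {v : Fin (p + q) → ℝ} (hv : v ∈ Wspan p q k) :
    ∃ s : ℕ → ℝ, v = ∑ i ∈ Finset.Icc 1 k, s i • wVec p q i := by
  induction hv using Submodule.span_induction with
  | mem x hx =>
      obtain ⟨m, h1, h2, rfl⟩ := hx
      refine ⟨fun i => if i = m then 1 else 0, ?_⟩
      rw [Finset.sum_eq_single m]
      · simp
      · intro b _ hb; simp [hb]
      · intro h; exact absurd (Finset.mem_Icc.2 ⟨h1, h2⟩) h
  | zero => exact ⟨0, by simp⟩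
  | add x y _ _ hx hy =>
      obtain ⟨s, rfl⟩ := hx; obtain ⟨t, rfl⟩ := hy
      exact ⟨s + t, by rw [← Finset.sum_add_distrib]; simp [add_smul]⟩
  | smul c x _ hx =>
      obtain ⟨s, rfl⟩ := hx
      exact ⟨c • s, by rw [Finset.smul_sum]; simp [smul_smul]⟩

lemma sum_mem_Wspan (p q : ℕ) (k : ℕ) (s : ℕ → ℝ) :
    ∑ i ∈ Finset.Icc 1 k, s i • wVec p q i ∈ Wspan p q k :=
  Submodule.sum_mem _ (fun i hi => Submodule.smul_mem _ _
    (wVec_mem_Wspan p q (Finset.mem_Icc.1 hi).1 (Finset.mem_Icc.1 hi).2))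

lemma nSet_mulVec_w_mem {p q : ℕ} (hpq : q ≤ p) {X : Matrix (Fin (p + q)) (Fin (p + q)) ℝ}
    (hX : X ∈ nSet p q) {k : ℕ} (hk1 : 1 ≤ k) (hk2 : k ≤ q) :
    X *ᵥ wVec p q k ∈ Wspan p q (k - 1) := by
  rw [nSet_mulVec_w hpq hX k hk1 hk2]
  exact Submodule.sum_mem _ (fun m hm => Submodule.smul_mem _ _
    (wVec_mem_Wspan p q (Finset.mem_Icc.1 hm).1 (Finset.mem_Icc.1 hm).2))

lemma nSet_maps_Wspan {p q : ℕ} (hpq : q ≤ p) {X : Matrix (Fin (p + q)) (Fin (p + q)) ℝ}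
    (hX : X ∈ nSet p q) {k : ℕ} (hk : k ≤ q) {v : Fin (p + q) → ℝ} (hv : v ∈ Wspan p q k) :
    X *ᵥ v ∈ Wspan p q (k - 1) := by
  induction hv using Submodule.span_induction with
  | mem x hx =>
      obtain ⟨m, h1, h2, rfl⟩ := hx
      exact Wspan_mono p q (by omega) (nSet_mulVec_w_mem hpq hX h1 (le_trans h2 hk))
  | zero => rw [Matrix.mulVec_zero]; exact Submodule.zero_mem _
  | add x y _ _ hx hy => rw [Matrix.mulVec_add]; exact Submodule.add_mem _ hx hy
  | smul c x _ hx => rw [Matrix.mulVec_smul]; exact Submodule.smul_mem _ _ hx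

lemma nSet_pow_mulVec_w {p q : ℕ} (hpq : q ≤ p) {X : Matrix (Fin (p + q)) (Fin (p + q)) ℝ}
    (hX : X ∈ nSet p q) {k : ℕ} (hk1 : 1 ≤ k) (hk2 : k ≤ q) (n : ℕ) :
    (X ^ n) *ᵥ wVec p q k ∈ Wspan p q (k - n) := by
  induction n with
  | zero => simpa using wVec_mem_Wspan p q hk1 (le_refl k)
  | succ n ih =>
      rcases Nat.lt_or_ge n k with hn | hn
      · rw [pow_succ', ← Matrix.mulVec_mulVec]
        have := nSet_maps_Wspan hpq hX (show k - n ≤ q by omega) ih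
        exact Wspan_mono p q (by omega) this
      · rw [pow_succ', ← Matrix.mulVec_mulVec]
        have h0 : (X ^ n) *ᵥ wVec p q k = 0 := by
          have := ih
          rw [show k - n = 0 by omega, Wspan_zero] at this
          simpa using this
        rw [h0, Matrix.mulVec_zero]
        exact Submodule.zero_mem _

lemma nSet_pow_mulVec_w_zero {p q : ℕ} (hpq : q ≤ p)
    {X : Matrix (Fin (p + q)) (Fin (p + q)) ℝ}
    (hX : X ∈ nSet p q) {k : ℕ} (hk1 : 1 ≤ k) (hk2 : k ≤ q) {n : ℕ} (hn : k ≤ n) :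
    (X ^ n) *ᵥ wVec p q k = 0 := by
  have := nSet_pow_mulVec_w hpq hX hk1 hk2 n
  rw [show k - n = 0 by omega, Wspan_zero] at this
  simpa using this

/-- `mulVec` at a fixed vector, as a continuous linear map in the matrix. -/
def mulVecCLM {n : ℕ} (x : Fin n → ℝ) : Matrix (Fin n) (Fin n) ℝ →ₗ[ℝ] (Fin n → ℝ) where
  toFun M := M *ᵥ x
  map_add' A B := Matrix.add_mulVec A B x
  map_smul' c A := by simp [Matrix.smul_mulVec]

lemma exp_mulVec_eq_sum {n : ℕ} (X : Matrix (Fin n) (Fin n) ℝ) (x : Fin n → ℝ) (k : ℕ)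
    (h : ∀ m, k ≤ m → (X ^ m) *ᵥ x = 0) :
    (NormedSpace.exp X) *ᵥ x
      = ∑ m ∈ Finset.range k, ((m.factorial : ℝ)⁻¹) • ((X ^ m) *ᵥ x) := by
  letI : SeminormedRing (Matrix (Fin n) (Fin n) ℝ) := Matrix.linftyOpSemiNormedRing
  letI : NormedRing (Matrix (Fin n) (Fin n) ℝ) := Matrix.linftyOpNormedRing
  letI : NormedAlgebra ℝ (Matrix (Fin n) (Fin n) ℝ) := Matrix.linftyOpNormedAlgebra
  have hs : Summable fun m : ℕ => ((m.factorial : ℝ)⁻¹) • X ^ m :=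
    NormedSpace.expSeries_summable' (𝕂 := ℝ) X
  have hcont : Continuous (mulVecCLM (n := n) x) :=
    LinearMap.continuous_of_finiteDimensional _
  have hmap : (mulVecCLM (n := n) x) (∑' m : ℕ, ((m.factorial : ℝ)⁻¹) • X ^ m)
      = ∑' m : ℕ, (mulVecCLM (n := n) x) (((m.factorial : ℝ)⁻¹) • X ^ m) := by
    exact (hs.hasSum.map _ hcont).tsum_eq.symm
  rw [NormedSpace.exp_eq_tsum (𝕂 := ℝ)]
  have : ∀ m : ℕ, (mulVecCLM (n := n) x) (((m.factorial : ℝ)⁻¹) • X ^ m)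
      = ((m.factorial : ℝ)⁻¹) • ((X ^ m) *ᵥ x) := fun m => by
    simp [mulVecCLM, Matrix.smul_mulVec]
  calc (mulVecCLM (n := n) x) (∑' m : ℕ, ((m.factorial : ℝ)⁻¹) • X ^ m)
      = ∑' m : ℕ, ((m.factorial : ℝ)⁻¹) • ((X ^ m) *ᵥ x) := by rw [hmap]; exact tsum_congr this
    _ = ∑ m ∈ Finset.range k, ((m.factorial : ℝ)⁻¹) • ((X ^ m) *ᵥ x) := by
        refine tsum_eq_sum (fun m hm => ?_)
        rw [h m (by simpa using hm), smul_zero]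

end Aux3

section Aux4

open Matrix

lemma expUnit_val {n : ℕ} (X : Matrix (Fin n) (Fin n) ℝ) :
    (expUnit X : Matrix (Fin n) (Fin n) ℝ) = NormedSpace.exp X := rfl

lemma exp_nSet_action {p q : ℕ} (hpq : q ≤ p) {X : Matrix (Fin (p + q)) (Fin (p + q)) ℝ}
    (hX : X ∈ nSet p q) {k : ℕ} (hk1 : 1 ≤ k) (hk2 : k ≤ q) :
    (NormedSpace.exp X) *ᵥ wVec p q k - wVec p q k ∈ Wspan p q (k - 1) := by
  rw [exp_mulVec_eq_sum X _ k (fun m hm => nSet_pow_mulVec_w_zero hpq hX hk1 hk2 hm)]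
  have hins : Finset.range k = insert 0 (Finset.Ico 1 k) := by
    ext m; simp [Finset.mem_Ico]; omega
  rw [hins, Finset.sum_insert (by simp)]
  have h0 : ((Nat.factorial 0 : ℝ)⁻¹) • ((X ^ 0) *ᵥ wVec p q k) = wVec p q k := by
    simp [Matrix.one_mulVec]
  rw [h0, add_sub_cancel_left]
  refine Submodule.sum_mem _ (fun m hm => ?_)
  simp only [Finset.mem_Ico] at hm
  refine Submodule.smul_mem _ _ ?_
  exact Wspan_mono p q (by omega) (nSet_pow_mulVec_w hpq hX hk1 hk2 m)

/-- If `g` shifts each `w_k` by an element of `Wspan (k-1)`, then `g` preserves `Wspan m`. -/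
lemma maps_Wspan_self {p q : ℕ} {M : Matrix (Fin (p + q)) (Fin (p + q)) ℝ}
    {m : ℕ}
    (hP : ∀ k, 1 ≤ k → k ≤ m → M *ᵥ wVec p q k - wVec p q k ∈ Wspan p q (k - 1))
    {v : Fin (p + q) → ℝ} (hv : v ∈ Wspan p q m) :
    M *ᵥ v ∈ Wspan p q m := by
  induction hv using Submodule.span_induction with
  | mem x hx =>
      obtain ⟨i, h1, h2, rfl⟩ := hx
      have : M *ᵥ wVec p q i = (M *ᵥ wVec p q i - wVec p q i) + wVec p q i := by abel
      rw [this]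
      exact Submodule.add_mem _
        (Wspan_mono p q (by omega) (hP i h1 h2))
        (wVec_mem_Wspan p q h1 h2)
  | zero => rw [Matrix.mulVec_zero]; exact Submodule.zero_mem _
  | add x y _ _ hx hy => rw [Matrix.mulVec_add]; exact Submodule.add_mem _ hx hy
  | smul c x _ hx => rw [Matrix.mulVec_smul]; exact Submodule.smul_mem _ _ hx

lemma Ngrp_action {p q : ℕ} (hpq : q ≤ p) {g : (Matrix (Fin (p + q)) (Fin (p + q)) ℝ)ˣ}
    (hg : g ∈ Ngrp p q) :
    ∀ k, 1 ≤ k → k ≤ q →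
      (g : Matrix (Fin (p + q)) (Fin (p + q)) ℝ) *ᵥ wVec p q k - wVec p q k
        ∈ Wspan p q (k - 1) := by
  induction hg using Subgroup.closure_induction with
  | mem x hx =>
      obtain ⟨X, hX, rfl⟩ := hx
      intro k hk1 hk2
      rw [expUnit_val]
      exact exp_nSet_action hpq hX hk1 hk2
  | one => intro k hk1 hk2; simp [Matrix.one_mulVec]
  | mul x y hx hy Px Py =>
      intro k hk1 hk2
      have hyd : (y : Matrix (Fin (p + q)) (Fin (p + q)) ℝ) *ᵥ wVec p q k - wVec p q k
          ∈ Wspan p q (k - 1) := Py k hk1 hk2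
      have expand : ((x * y : (Matrix (Fin (p + q)) (Fin (p + q)) ℝ)ˣ)
            : Matrix (Fin (p + q)) (Fin (p + q)) ℝ) *ᵥ wVec p q k - wVec p q k
          = (x : Matrix (Fin (p + q)) (Fin (p + q)) ℝ) *ᵥ
              ((y : Matrix (Fin (p + q)) (Fin (p + q)) ℝ) *ᵥ wVec p q k - wVec p q k)
            + ((x : Matrix (Fin (p + q)) (Fin (p + q)) ℝ) *ᵥ wVec p q k - wVec p q k) := by
        rw [Matrix.mulVec_sub, Units.val_mul, ← Matrix.mulVec_mulVec]
        abel
      rw [expand]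
      exact Submodule.add_mem _
        (maps_Wspan_self (fun i h1 h2 => Px i h1 (by omega)) hyd)
        (Px k hk1 hk2)
  | inv x hx Px =>
      intro k
      induction k using Nat.strong_induction_on with
      | _ k IH =>
        intro hk1 hk2
        have hinvmaps : ∀ v ∈ Wspan p q (k - 1),
            ((x⁻¹ : (Matrix (Fin (p + q)) (Fin (p + q)) ℝ)ˣ)
              : Matrix (Fin (p + q)) (Fin (p + q)) ℝ) *ᵥ v ∈ Wspan p q (k - 1) := by
          intro v hv
          refine maps_Wspan_self (fun m hm1 hm2 => ?_) hv
          exact IH m (by omega) hm1 (by omega)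
        have key : ((x⁻¹ : (Matrix (Fin (p + q)) (Fin (p + q)) ℝ)ˣ)
              : Matrix (Fin (p + q)) (Fin (p + q)) ℝ) *ᵥ wVec p q k - wVec p q k
            = -(((x⁻¹ : (Matrix (Fin (p + q)) (Fin (p + q)) ℝ)ˣ)
                : Matrix (Fin (p + q)) (Fin (p + q)) ℝ) *ᵥ
                ((x : Matrix (Fin (p + q)) (Fin (p + q)) ℝ) *ᵥ wVec p q k - wVec p q k)) := by
          rw [Matrix.mulVec_sub, Matrix.mulVec_mulVec]
          have : ((x⁻¹ : (Matrix (Fin (p + q)) (Fin (p + q)) ℝ)ˣ)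
              : Matrix (Fin (p + q)) (Fin (p + q)) ℝ)
              * (x : Matrix (Fin (p + q)) (Fin (p + q)) ℝ) = 1 := by
            rw [← Units.val_mul, inv_mul_cancel, Units.val_one]
          rw [this, Matrix.one_mulVec]
          abel
        rw [key]
        exact Submodule.neg_mem _ (hinvmaps _ (Px k hk1 hk2))

end Aux4

section Aux5

open Matrix

lemma vecMulVec_mul_vecMulVec {n : ℕ} (u v u' v' : Fin n → ℝ) :
    vecMulVec u v * vecMulVec u' v' = (v ⬝ᵥ u') • vecMulVec u v' := by
  ext r s
  simp only [Matrix.mul_apply, vecMulVec_apply, Matrix.smul_apply, smul_eq_mul, dotProduct,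
    Finset.sum_mul]
  exact Finset.sum_congr rfl (fun k _ => by ring)

lemma vecMulVec_mulVec {n : ℕ} (u v x : Fin n → ℝ) :
    vecMulVec u v *ᵥ x = (v ⬝ᵥ x) • u := by
  funext r
  simp only [Matrix.mulVec, vecMulVec_apply, dotProduct, Pi.smul_apply, smul_eq_mul,
    Finset.sum_mul]
  exact Finset.sum_congr rfl (fun k _ => by ring)

lemma vecMulVec_transpose {n : ℕ} (u v : Fin n → ℝ) :
    (vecMulVec u v)ᵀ = vecMulVec v u := by
  ext r s; simp [vecMulVec_apply, mul_comm]

section dots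

variable {p q : ℕ}

lemma dot_ww (hpq : q ≤ p) {a b : ℕ} (ha1 : 1 ≤ a) (ha2 : a ≤ q) (hb1 : 1 ≤ b) (hb2 : b ≤ q) :
    wVec p q a ⬝ᵥ wVec p q b = if a = b then 2 else 0 := by
  rw [wVec, wVec, sub_dotProduct, dotProduct_sub, dotProduct_sub,
    stdE_dot _ _ (by omega) (by omega), stdE_dot _ _ (by omega) (by omega),
    stdE_dot _ _ (by omega) (by omega), stdE_dot _ _ (by omega) (by omega)]
  split_ifs <;> first | (exfalso; omega) | norm_num

lemma dot_vv (hpq : q ≤ p) {a b : ℕ} (ha1 : 1 ≤ a) (ha2 : a ≤ q) (hb1 : 1 ≤ b) (hb2 : b ≤ q)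
    (hab : a ≠ b) : vVec p q a ⬝ᵥ vVec p q b = 0 := by
  rw [vVec, vVec, add_dotProduct, dotProduct_add, dotProduct_add,
    stdE_dot _ _ (by omega) (by omega), stdE_dot _ _ (by omega) (by omega),
    stdE_dot _ _ (by omega) (by omega), stdE_dot _ _ (by omega) (by omega)]
  split_ifs <;> first | (exfalso; omega) | norm_num

lemma dot_vw (hpq : q ≤ p) {a b : ℕ} (ha1 : 1 ≤ a) (ha2 : a ≤ q) (hb1 : 1 ≤ b) (hb2 : b ≤ q) :
    vVec p q a ⬝ᵥ wVec p q b = 0 := by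
  rw [vVec, wVec, add_dotProduct, dotProduct_sub, dotProduct_sub,
    stdE_dot _ _ (by omega) (by omega), stdE_dot _ _ (by omega) (by omega),
    stdE_dot _ _ (by omega) (by omega), stdE_dot _ _ (by omega) (by omega)]
  split_ifs <;> first | (exfalso; omega) | norm_num

lemma dot_wv (hpq : q ≤ p) {a b : ℕ} (ha1 : 1 ≤ a) (ha2 : a ≤ q) (hb1 : 1 ≤ b) (hb2 : b ≤ q) :
    wVec p q a ⬝ᵥ vVec p q b = 0 := by
  rw [wVec, vVec, sub_dotProduct, dotProduct_add, dotProduct_add,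
    stdE_dot _ _ (by omega) (by omega), stdE_dot _ _ (by omega) (by omega),
    stdE_dot _ _ (by omega) (by omega), stdE_dot _ _ (by omega) (by omega)]
  split_ifs <;> first | (exfalso; omega) | norm_num

end dots

/-- The generator `X(i,j,t) = t(v_j ⊗ v_i − w_i ⊗ w_j)`. -/
def genX (p q i j : ℕ) (t : ℝ) : Matrix (Fin (p + q)) (Fin (p + q)) ℝ :=
  t • (vecMulVec (vVec p q j) (vVec p q i) - vecMulVec (wVec p q i) (wVec p q j))

variable {p q : ℕ}

lemma eps_mul_v (hpq : q ≤ p) {a : ℕ} (ha1 : 1 ≤ a) (ha2 : a ≤ q) :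
    (fun r : Fin (p + q) => (if (r : ℕ) < p then (1:ℝ) else -1) * vVec p q a r)
      = wVec p q a := by
  funext r
  rw [vVec_apply, wVec_apply]
  split_ifs <;> first | (exfalso; omega) | ring

lemma eps_mul_w (hpq : q ≤ p) {a : ℕ} (ha1 : 1 ≤ a) (ha2 : a ≤ q) :
    (fun r : Fin (p + q) => (if (r : ℕ) < p then (1:ℝ) else -1) * wVec p q a r)
      = vVec p q a := by
  funext r
  rw [vVec_apply, wVec_apply]
  split_ifs <;> first | (exfalso; omega) | ring

lemma J_mul_vecMulVec (u v : Fin (p + q) → ℝ) :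
    Jmat p q * vecMulVec u v
      = vecMulVec (fun r : Fin (p + q) => (if (r : ℕ) < p then (1:ℝ) else -1) * u r) v := by
  ext r s
  simp [Jmat, Matrix.diagonal_mul, vecMulVec_apply, mul_assoc]

lemma vecMulVec_mul_J (u v : Fin (p + q) → ℝ) :
    vecMulVec u v * Jmat p q
      = vecMulVec u (fun s : Fin (p + q) => (if (s : ℕ) < p then (1:ℝ) else -1) * v s) := by
  ext r s
  simp [Jmat, Matrix.mul_diagonal, vecMulVec_apply]
  try ring

lemma genX_mem_soSet (hpq : q ≤ p) {i j : ℕ} (hi1 : 1 ≤ i) (hiq : i ≤ q)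
    (hj1 : 1 ≤ j) (hjq : j ≤ q) (t : ℝ) : genX p q i j t ∈ soSet p q := by
  show (genX p q i j t)ᵀ * Jmat p q + Jmat p q * genX p q i j t = 0
  rw [genX, Matrix.transpose_smul, Matrix.transpose_sub, vecMulVec_transpose,
    vecMulVec_transpose, Matrix.smul_mul, Matrix.mul_smul, Matrix.sub_mul, Matrix.mul_sub,
    vecMulVec_mul_J, vecMulVec_mul_J, J_mul_vecMulVec, J_mul_vecMulVec,
    eps_mul_v hpq hj1 hjq, eps_mul_w hpq hi1 hiq]
  rw [smul_sub, smul_sub]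
  abel

lemma genX_apply (i j : ℕ) (t : ℝ) (r s : Fin (p + q)) :
    genX p q i j t r s
      = t * (vVec p q j r * vVec p q i s - wVec p q i r * wVec p q j s) := by
  simp [genX, vecMulVec_apply, Matrix.sub_apply]

lemma ent_eval {n : ℕ} (X : Matrix (Fin n) (Fin n) ℝ) {a b : ℕ} (ha1 : 1 ≤ a) (ha2 : a ≤ n)
    (hb1 : 1 ≤ b) (hb2 : b ≤ n) :
    ent X a b = X ⟨a - 1, by omega⟩ ⟨b - 1, by omega⟩ := by
  unfold ent
  rw [dif_pos ⟨by omega, by omega⟩]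

lemma vVec_zero' {p' q' : ℕ} (a : ℕ) (r : Fin (p' + q')) (h1 : (r : ℕ) + 1 ≠ p' - a + 1)
    (h2 : (r : ℕ) + 1 ≠ p' + a) : vVec p' q' a r = 0 := by
  rw [vVec_apply, if_neg h1, if_neg h2]; ring

lemma vVec_lo' {p' q' : ℕ} (a : ℕ) (r : Fin (p' + q')) (h1 : (r : ℕ) + 1 = p' - a + 1)
    (h2 : (r : ℕ) + 1 ≠ p' + a) : vVec p' q' a r = 1 := by
  rw [vVec_apply, if_pos h1, if_neg h2]; ring

lemma vVec_hi' {p' q' : ℕ} (a : ℕ) (r : Fin (p' + q')) (h1 : (r : ℕ) + 1 ≠ p' - a + 1)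
    (h2 : (r : ℕ) + 1 = p' + a) : vVec p' q' a r = 1 := by
  rw [vVec_apply, if_neg h1, if_pos h2]; ring

lemma wVec_zero' {p' q' : ℕ} (a : ℕ) (r : Fin (p' + q')) (h1 : (r : ℕ) + 1 ≠ p' - a + 1)
    (h2 : (r : ℕ) + 1 ≠ p' + a) : wVec p' q' a r = 0 := by
  rw [wVec_apply, if_neg h1, if_neg h2]; ring

lemma wVec_lo' {p' q' : ℕ} (a : ℕ) (r : Fin (p' + q')) (h1 : (r : ℕ) + 1 = p' - a + 1)
    (h2 : (r : ℕ) + 1 ≠ p' + a) : wVec p' q' a r = 1 := by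
  rw [wVec_apply, if_pos h1, if_neg h2]; ring

lemma wVec_hi' {p' q' : ℕ} (a : ℕ) (r : Fin (p' + q')) (h1 : (r : ℕ) + 1 ≠ p' - a + 1)
    (h2 : (r : ℕ) + 1 = p' + a) : wVec p' q' a r = -1 := by
  rw [wVec_apply, if_neg h1, if_pos h2]; ring

set_option maxHeartbeats 1000000 in
lemma genX_mem_nSet (hpq : q ≤ p) {i j : ℕ} (hi1 : 1 ≤ i) (hij : i < j)
    (hjq : j ≤ q) (t : ℝ) : genX p q i j t ∈ nSet p q := by
  refine ⟨genX_mem_soSet hpq hi1 (by omega) (by omega) hjq t, ?_, ?_, ?_, ?_, ?_⟩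
  · -- top-left block vanishes
    intro a b ha1 ha2 hb1 hb2
    rw [ent_eval _ ha1 (by omega) hb1 (by omega), genX_apply]
    have e1 : vVec p q j (⟨a - 1, by omega⟩ : Fin (p + q)) = 0 :=
      vVec_zero' _ _ (by simp only [Fin.val_mk]; omega) (by simp only [Fin.val_mk]; omega)
    have e2 : wVec p q i (⟨a - 1, by omega⟩ : Fin (p + q)) = 0 :=
      wVec_zero' _ _ (by simp only [Fin.val_mk]; omega) (by simp only [Fin.val_mk]; omega)
    rw [e1, e2]; ring
  · -- antidiagonal B entries vanish
    intro l hl1 hl2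
    rw [ent_eval _ (by omega) (by omega) (by omega) (by omega), genX_apply]
    rcases eq_or_ne l j with h | h
    · have e1 : vVec p q i (⟨p + l - 1, by omega⟩ : Fin (p + q)) = 0 :=
        vVec_zero' _ _ (by simp only [Fin.val_mk]; omega) (by simp only [Fin.val_mk]; omega)
      have e2 : wVec p q i (⟨p - l + 1 - 1, by omega⟩ : Fin (p + q)) = 0 :=
        wVec_zero' _ _ (by simp only [Fin.val_mk]; omega) (by simp only [Fin.val_mk]; omega)
      rw [e1, e2]; ring
    · have e1 : vVec p q j (⟨p - l + 1 - 1, by omega⟩ : Fin (p + q)) = 0 :=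
        vVec_zero' _ _ (by simp only [Fin.val_mk]; omega) (by simp only [Fin.val_mk]; omega)
      have e2 : wVec p q j (⟨p + l - 1, by omega⟩ : Fin (p + q)) = 0 :=
        wVec_zero' _ _ (by simp only [Fin.val_mk]; omega) (by simp only [Fin.val_mk]; omega)
      rw [e1, e2]; ring
  · -- top rows: A-part equals B-part
    intro a l ha1 ha2 hl1 hl2
    rw [ent_eval _ ha1 (by omega) (by omega) (by omega),
      ent_eval _ ha1 (by omega) (by omega) (by omega), genX_apply, genX_apply]
    have e1 : vVec p q j (⟨a - 1, by omega⟩ : Fin (p + q)) = 0 :=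
      vVec_zero' _ _ (by simp only [Fin.val_mk]; omega) (by simp only [Fin.val_mk]; omega)
    have e2 : wVec p q i (⟨a - 1, by omega⟩ : Fin (p + q)) = 0 :=
      wVec_zero' _ _ (by simp only [Fin.val_mk]; omega) (by simp only [Fin.val_mk]; omega)
    rw [e1, e2]; ring
  · -- condition 4
    intro a b ha1 hab hb2
    rw [ent_eval _ (by omega) (by omega) (by omega) (by omega),
      ent_eval _ (by omega) (by omega) (by omega) (by omega), genX_apply, genX_apply]
    rcases eq_or_ne a j with h | h
    · have e1 : wVec p q i (⟨p + 1 - b - 1, by omega⟩ : Fin (p + q)) = 0 :=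
        wVec_zero' _ _ (by simp only [Fin.val_mk]; omega) (by simp only [Fin.val_mk]; omega)
      have e2 : vVec p q i (⟨p + 1 - a - 1, by omega⟩ : Fin (p + q)) = 0 :=
        vVec_zero' _ _ (by simp only [Fin.val_mk]; omega) (by simp only [Fin.val_mk]; omega)
      have e3 : vVec p q i (⟨p + a - 1, by omega⟩ : Fin (p + q)) = 0 :=
        vVec_zero' _ _ (by simp only [Fin.val_mk]; omega) (by simp only [Fin.val_mk]; omega)
      rw [e1, e2, e3]; ring
    · have e1 : wVec p q j (⟨p + 1 - a - 1, by omega⟩ : Fin (p + q)) = 0 :=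
        wVec_zero' _ _ (by simp only [Fin.val_mk]; omega) (by simp only [Fin.val_mk]; omega)
      have e2 : wVec p q j (⟨p + a - 1, by omega⟩ : Fin (p + q)) = 0 :=
        wVec_zero' _ _ (by simp only [Fin.val_mk]; omega) (by simp only [Fin.val_mk]; omega)
      rcases eq_or_ne a i with h' | h'
      · have e3 : vVec p q i (⟨p + 1 - a - 1, by omega⟩ : Fin (p + q)) = 1 :=
          vVec_lo' _ _ (by simp only [Fin.val_mk]; omega) (by simp only [Fin.val_mk]; omega)
        have e4 : vVec p q i (⟨p + a - 1, by omega⟩ : Fin (p + q)) = 1 :=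
          vVec_hi' _ _ (by simp only [Fin.val_mk]; omega) (by simp only [Fin.val_mk]; omega)
        rw [e1, e2, e3, e4]
      · have e3 : vVec p q i (⟨p + 1 - a - 1, by omega⟩ : Fin (p + q)) = 0 :=
          vVec_zero' _ _ (by simp only [Fin.val_mk]; omega) (by simp only [Fin.val_mk]; omega)
        have e4 : vVec p q i (⟨p + a - 1, by omega⟩ : Fin (p + q)) = 0 :=
          vVec_zero' _ _ (by simp only [Fin.val_mk]; omega) (by simp only [Fin.val_mk]; omega)
        rw [e1, e2, e3, e4]
  · -- condition 5
    intro a b ha1 hab hb2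
    rw [ent_eval _ (by omega) (by omega) (by omega) (by omega),
      ent_eval _ (by omega) (by omega) (by omega) (by omega), genX_apply, genX_apply]
    rcases eq_or_ne b i with h | h
    · have e1 : vVec p q j (⟨p + a - 1, by omega⟩ : Fin (p + q)) = 0 :=
        vVec_zero' _ _ (by simp only [Fin.val_mk]; omega) (by simp only [Fin.val_mk]; omega)
      have e2 : vVec p q j (⟨p + 1 - a - 1, by omega⟩ : Fin (p + q)) = 0 :=
        vVec_zero' _ _ (by simp only [Fin.val_mk]; omega) (by simp only [Fin.val_mk]; omega)
      have e3 : wVec p q j (⟨p + b - 1, by omega⟩ : Fin (p + q)) = 0 :=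
        wVec_zero' _ _ (by simp only [Fin.val_mk]; omega) (by simp only [Fin.val_mk]; omega)
      rw [e1, e2, e3]; ring
    · have e1 : vVec p q i (⟨p + b - 1, by omega⟩ : Fin (p + q)) = 0 :=
        vVec_zero' _ _ (by simp only [Fin.val_mk]; omega) (by simp only [Fin.val_mk]; omega)
      rcases eq_or_ne a i with h' | h'
      · have e2 : wVec p q i (⟨p + a - 1, by omega⟩ : Fin (p + q)) = -1 :=
          wVec_hi' _ _ (by simp only [Fin.val_mk]; omega) (by simp only [Fin.val_mk]; omega)
        have e3 : wVec p q i (⟨p + 1 - a - 1, by omega⟩ : Fin (p + q)) = 1 :=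
          wVec_lo' _ _ (by simp only [Fin.val_mk]; omega) (by simp only [Fin.val_mk]; omega)
        rw [e1, e2, e3]; ring
      · have e2 : wVec p q i (⟨p + a - 1, by omega⟩ : Fin (p + q)) = 0 :=
          wVec_zero' _ _ (by simp only [Fin.val_mk]; omega) (by simp only [Fin.val_mk]; omega)
        have e3 : wVec p q i (⟨p + 1 - a - 1, by omega⟩ : Fin (p + q)) = 0 :=
          wVec_zero' _ _ (by simp only [Fin.val_mk]; omega) (by simp only [Fin.val_mk]; omega)
        rw [e1, e2, e3]; ring

lemma genX_sq_zero (hpq : q ≤ p) {i j : ℕ} (hi1 : 1 ≤ i) (hij : i < j) (hjq : j ≤ q)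
    (t : ℝ) : genX p q i j t * genX p q i j t = 0 := by
  rw [genX, Matrix.smul_mul, Matrix.mul_smul, Matrix.sub_mul, Matrix.mul_sub,
    Matrix.mul_sub, vecMulVec_mul_vecMulVec, vecMulVec_mul_vecMulVec,
    vecMulVec_mul_vecMulVec, vecMulVec_mul_vecMulVec,
    dot_vv hpq hi1 (by omega) (by omega) hjq (by omega),
    dot_vw hpq hi1 (by omega) hi1 (by omega),
    dot_wv hpq (by omega) hjq (by omega) hjq,
    dot_ww hpq (by omega) hjq hi1 (by omega)]
  rw [if_neg (by omega)]
  simp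

lemma genX_mulVec_w (hpq : q ≤ p) {i j : ℕ} (hi1 : 1 ≤ i) (hij : i < j) (hjq : j ≤ q)
    (t : ℝ) {m : ℕ} (hm1 : 1 ≤ m) (hm2 : m ≤ q) :
    genX p q i j t *ᵥ wVec p q m
      = if m = j then (-2 * t) • wVec p q i else 0 := by
  rw [genX, Matrix.smul_mulVec, Matrix.sub_mulVec, vecMulVec_mulVec, vecMulVec_mulVec,
    dot_vw hpq hi1 (by omega) hm1 hm2, dot_ww hpq (by omega) hjq hm1 hm2]
  split_ifs <;> first | (exfalso; omega) | module

lemma exp_of_sq_zero {n : ℕ} (X : Matrix (Fin n) (Fin n) ℝ) (h : X * X = 0) :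
    NormedSpace.exp X = 1 + X := by
  letI : SeminormedRing (Matrix (Fin n) (Fin n) ℝ) := Matrix.linftyOpSemiNormedRing
  letI : NormedRing (Matrix (Fin n) (Fin n) ℝ) := Matrix.linftyOpNormedRing
  letI : NormedAlgebra ℝ (Matrix (Fin n) (Fin n) ℝ) := Matrix.linftyOpNormedAlgebra
  rw [NormedSpace.exp_eq_tsum (𝕂 := ℝ)]
  beta_reduce
  have hz : ∀ m : ℕ, 2 ≤ m → X ^ m = 0 := by
    intro m hm
    calc X ^ m = X * X * X ^ (m - 2) := by rw [← pow_two, ← pow_add]; congr 1; omega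
    _ = 0 := by rw [h, zero_mul]
  rw [tsum_eq_sum (s := Finset.range 2) (fun m hm => by
    rw [hz m (by simp at hm; omega), smul_zero])]
  rw [Finset.sum_range_succ, Finset.sum_range_one]
  norm_num

end Aux5

section Aux6

open Matrix

lemma exists_Ngrp_elt (p q : ℕ) (hpq : q ≤ p) {j : ℕ} (hj1 : 1 ≤ j) (hj2 : j ≤ q)
    (s : ℕ → ℝ) : ∀ m, m ≤ j - 1 → ∃ g ∈ Ngrp p q,
      (g : Matrix (Fin (p + q)) (Fin (p + q)) ℝ) *ᵥ wVec p q j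
        = (∑ i ∈ Finset.Icc 1 m, s i • wVec p q i) + wVec p q j := by
  intro m
  induction m with
  | zero =>
      intro _
      refine ⟨1, one_mem _, ?_⟩
      simp [Matrix.one_mulVec]
  | succ m ih =>
      intro hm
      obtain ⟨g, hg, hgact⟩ := ih (by omega)
      set t : ℝ := -(s (m + 1)) / 2 with ht
      have hmem : genX p q (m + 1) j t ∈ nSet p q :=
        genX_mem_nSet hpq (by omega) (by omega) hj2 t
      have hu : expUnit (genX p q (m + 1) j t) ∈ Ngrp p q :=
        Subgroup.subset_closure ⟨_, hmem, rfl⟩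
      refine ⟨expUnit (genX p q (m + 1) j t) * g, mul_mem hu hg, ?_⟩
      have hexp : ((expUnit (genX p q (m + 1) j t))
            : Matrix (Fin (p + q)) (Fin (p + q)) ℝ) = 1 + genX p q (m + 1) j t := by
        rw [expUnit_val, exp_of_sq_zero _ (genX_sq_zero (i := m + 1) hpq (by omega) (by omega) hj2 t)]
      have hsum : ∀ (A : Matrix (Fin (p + q)) (Fin (p + q)) ℝ) (S : Finset ℕ)
          (f : ℕ → (Fin (p + q) → ℝ)), A *ᵥ (∑ i ∈ S, f i) = ∑ i ∈ S, A *ᵥ f i :=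
        fun A S f => by
          rw [← Matrix.mulVecLin_apply, map_sum]
          simp [Matrix.mulVecLin_apply]
      have hXsum : genX p q (m + 1) j t *ᵥ (∑ i ∈ Finset.Icc 1 m, s i • wVec p q i) = 0 := by
        rw [hsum]
        refine Finset.sum_eq_zero (fun i hi => ?_)
        simp only [Finset.mem_Icc] at hi
        rw [Matrix.mulVec_smul,
          genX_mulVec_w hpq (by omega) (by omega) hj2 t hi.1 (by omega),
          if_neg (by omega), smul_zero]
      have hXwj : genX p q (m + 1) j t *ᵥ wVec p q j = s (m + 1) • wVec p q (m + 1) := by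
        rw [genX_mulVec_w hpq (by omega) (by omega) hj2 t hj1 hj2, if_pos rfl, ht]
        congr 1
        ring
      rw [Units.val_mul, ← Matrix.mulVec_mulVec, hgact, hexp, Matrix.add_mulVec,
        Matrix.one_mulVec, Matrix.mulVec_add, hXsum, hXwj,
        Finset.sum_Icc_succ_top (by omega : 1 ≤ m + 1)]
      abel

end Aux6

/-- For every `1 ≤ j ≤ q`, the `N`-orbit of `w_j` is
`N(w_j) = {s_1 w_1 + ⋯ + s_{j-1} w_{j-1} + w_j : s_i ∈ ℝ}`
(in particular `N(w_1) = {w_1}`). -/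
theorem Ngrp_orbit_w (p q : ℕ) (hq : 1 ≤ q) (hpq : q ≤ p)
    (j : ℕ) (hj1 : 1 ≤ j) (hj2 : j ≤ q) :
    orb (Ngrp p q) (wVec p q j)
      = {v | ∃ s : ℕ → ℝ,
          v = (∑ i ∈ Finset.Icc 1 (j - 1), s i • wVec p q i) + wVec p q j} := by
  ext v
  constructor
  · rintro ⟨g, hg, rfl⟩
    have h := Ngrp_action hpq hg j hj1 hj2
    obtain ⟨s, hs⟩ := Wspan_elim p q h
    exact ⟨s, by rw [← hs]; abel⟩
  · rintro ⟨s, rfl⟩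
    obtain ⟨g, hg, hact⟩ := exists_Ngrp_elt p q hpq hj1 hj2 s (j - 1) le_rfl
    exact ⟨g, hg, hact⟩
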